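/- Let λ > 0, θ ∈ [0,1], and suppose L : V × Y → [0,∞) is a loss such that for every u ∈ V, y ∈ Y there is a non-negative differentiable φ_{u,y} : ℝ → [0,∞) with: (1) φ_{u,y}(0) = L(u,y); (2) for all t > 0, sup over v with ‖u−v‖ ≤ t of L(v,y) is at most φ_{u,y}(t); (3) φ_{u,y}' ≥ 0 on [0,∞); (4) |φ_{u,y}'(t₁) − φ_{u,y}'(t₀)| ≤ (λ/2)^{1/(1−θ)}·|t₁ − t₀|^{θ/(1−θ)} for all t₀, t₁ ∈ ℝ. Then L is (λ,θ)-self-bounding Lipschitz: |L(u,y) − L(v,y)| ≤ λ·max{L(u,y), L(v,y)}^θ·‖u−v‖ for all u, v ∈ V, y ∈ Y. -/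

import Mathlib

open Real Set Filter Topology

lemma sbl_step {f : ℝ → ℝ} (hf : Differentiable ℝ f) (hfnn : ∀ s, 0 ≤ f s)
    {H α : ℝ} (hH : 0 < H) (hα : 0 ≤ α)
    (hHol : ∀ a b : ℝ, |deriv f b - deriv f a| ≤ H * |b - a| ^ α)
    {x r : ℝ} (hr : 0 < r) (hp : 0 < deriv f x) (hrα : H * r ^ α ≤ deriv f x / 2) :
    deriv f x * r ≤ 2 * f x := by
  set p := deriv f x with hpdef
  have hlow : ∀ s ∈ Icc (x - r) x, p / 2 ≤ deriv f s := by
    intro s hs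
    obtain ⟨hs1, hs2⟩ := hs
    have habs : |x - s| ≤ r := by
      rw [abs_sub_le_iff]
      constructor
      · linarith
      · linarith
    have h1 : |deriv f x - deriv f s| ≤ H * |x - s| ^ α := hHol s x
    have h2 : |x - s| ^ α ≤ r ^ α := Real.rpow_le_rpow (abs_nonneg _) habs hα
    have h3 : H * |x - s| ^ α ≤ H * r ^ α := by
      exact mul_le_mul_of_nonneg_left h2 hH.le
    have h4 := (abs_le.mp (h1.trans (h3.trans hrα))).2
    linarith
  set F : ℝ → ℝ := fun s => f s - p / 2 * s with hF
  have hFd : ∀ s, HasDerivAt F (deriv f s - p / 2) s := by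
    intro s
    rw [hF]
    exact ((hf s).hasDerivAt.sub ((hasDerivAt_id s).const_mul (p / 2))).congr_deriv (by ring)
  have hmono : MonotoneOn F (Icc (x - r) x) := by
    apply monotoneOn_of_deriv_nonneg (convex_Icc _ _)
    · exact fun s _ => ((hFd s).differentiableAt.continuousAt).continuousWithinAt
    · exact fun s _ => ((hFd s).differentiableAt).differentiableWithinAt
    · intro s hs
      rw [interior_Icc] at hs
      rw [(hFd s).deriv]
      have := hlow s ⟨hs.1.le, hs.2.le⟩
      linarith
  have hmem1 : x - r ∈ Icc (x - r) x := ⟨le_refl _, by linarith⟩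
  have hmem2 : x ∈ Icc (x - r) x := ⟨by linarith, le_refl _⟩
  have := hmono hmem1 hmem2 (by linarith)
  simp only [hF] at this
  have := hfnn (x - r)
  nlinarith

lemma sbl_grad {f : ℝ → ℝ} (hf : Differentiable ℝ f) (hfnn : ∀ s, 0 ≤ f s)
    {lam θ : ℝ} (hlam : 0 < lam) (hθ0 : 0 ≤ θ) (hθ1 : θ < 1)
    (hHol : ∀ a b : ℝ, |deriv f b - deriv f a| ≤
      (lam / 2) ^ ((1 : ℝ) / (1 - θ)) * |b - a| ^ (θ / (1 - θ)))
    (x : ℝ) : deriv f x ≤ lam * f x ^ θ := by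
  have h1θ : (0:ℝ) < 1 - θ := by linarith
  set H : ℝ := (lam / 2) ^ ((1 : ℝ) / (1 - θ)) with hHdef
  have hH : 0 < H := Real.rpow_pos_of_pos (by linarith) _
  have hα : 0 ≤ θ / (1 - θ) := div_nonneg hθ0 h1θ.le
  have hfθ : 0 ≤ f x ^ θ := Real.rpow_nonneg (hfnn x) θ
  rcases le_or_gt (deriv f x) 0 with hp | hp
  · exact hp.trans (mul_nonneg hlam.le hfθ)
  set p := deriv f x with hpdef
  rcases eq_or_lt_of_le hθ0 with hθz | hθpos
  · -- θ = 0
    rw [← hθz, Real.rpow_zero, mul_one]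
    by_contra hcon
    push_neg at hcon
    have hHval : H = lam / 2 := by
      rw [hHdef, ← hθz]
      norm_num
    have hr : 0 < (2 * f x + 1) / p := div_pos (by linarith [hfnn x]) hp
    have hstep := sbl_step hf hfnn hH hα hHol hr hp (by
      rw [← hθz]
      simp only [zero_div, Real.rpow_zero, mul_one]
      rw [hHval]; linarith)
    rw [mul_div_cancel₀ _ (ne_of_gt hp)] at hstep
    linarith [hfnn x]
  · -- θ > 0
    set β : ℝ := (1 - θ) / θ with hβdef
    have hβ : 0 < β := div_pos h1θ hθpos
    have h2H : (0:ℝ) < 2 * H := by linarith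
    set r : ℝ := (p / (2 * H)) ^ β with hrdef
    have hrpos : 0 < r := Real.rpow_pos_of_pos (div_pos hp h2H) _
    have hβα : β * (θ / (1 - θ)) = 1 := by
      rw [hβdef]; field_simp
    have hrα : H * r ^ (θ / (1 - θ)) = p / 2 := by
      rw [hrdef, ← Real.rpow_mul (div_pos hp h2H).le, hβα, Real.rpow_one]
      field_simp
    have hstep := sbl_step hf hfnn hH hα hHol hrpos hp (le_of_eq hrα)
    -- p * r ≤ 2 * f x  ⟹  p ≤ lam * f x ^ θ
    have hrsplit : r = p ^ β / (2 * H) ^ β := by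
      rw [hrdef, Real.div_rpow hp.le h2H.le]
    have h2Hβ : 0 < (2 * H) ^ β := Real.rpow_pos_of_pos h2H _
    have hkey : p ^ ((1:ℝ) / θ) ≤ 2 * f x * (2 * H) ^ β := by
      have hsum : (1:ℝ) / θ = 1 + β := by
        rw [hβdef]; field_simp; ring
      rw [hsum, Real.rpow_add hp, Real.rpow_one]
      rw [hrsplit] at hstep
      calc p * p ^ β = p * (p ^ β / (2 * H) ^ β) * (2 * H) ^ β := by
            field_simp
        _ ≤ 2 * f x * (2 * H) ^ β := by
            exact mul_le_mul_of_nonneg_right hstep h2Hβ.le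
    -- raise both sides to power θ
    have hfinal := Real.rpow_le_rpow (Real.rpow_nonneg hp.le _) hkey hθ0
    rw [← Real.rpow_mul hp.le] at hfinal
    have : (1:ℝ) / θ * θ = 1 := by field_simp
    rw [this, Real.rpow_one] at hfinal
    have hRHS : (2 * f x * (2 * H) ^ β) ^ θ = lam * f x ^ θ := by
      rw [Real.mul_rpow (by linarith [hfnn x]) h2Hβ.le,
        Real.mul_rpow (by norm_num) (hfnn x),
        ← Real.rpow_mul h2H.le]
      have hβθ : β * θ = 1 - θ := by
        rw [hβdef]; field_simp
      rw [hβθ, Real.mul_rpow (by norm_num) hH.le, hHdef,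
        ← Real.rpow_mul (by linarith : (0:ℝ) ≤ lam / 2)]
      have h11 : (1:ℝ) / (1 - θ) * (1 - θ) = 1 := by field_simp
      rw [h11, Real.rpow_one]
      have h2 : (2:ℝ) ^ θ * ((2:ℝ) ^ (1 - θ) * (lam / 2)) =
          (2:ℝ) ^ (θ + (1 - θ)) * (lam / 2) := by
        rw [Real.rpow_add (by norm_num : (0:ℝ) < 2)]; ring
      calc (2:ℝ) ^ θ * f x ^ θ * ((2:ℝ) ^ (1 - θ) * (lam / 2))
          = (2:ℝ) ^ θ * ((2:ℝ) ^ (1 - θ) * (lam / 2)) * f x ^ θ := by ring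
        _ = (2:ℝ) ^ (θ + (1 - θ)) * (lam / 2) * f x ^ θ := by rw [h2]
        _ = lam * f x ^ θ := by
            rw [show θ + (1 - θ) = 1 by ring, Real.rpow_one]; ring
    rw [hRHS] at hfinal
    exact hfinal

lemma sbl_ode {f : ℝ → ℝ} (hf : Differentiable ℝ f) (hfnn : ∀ s, 0 ≤ f s)
    {lam θ : ℝ} (hlam : 0 < lam) (hθ0 : 0 ≤ θ) (hθ1 : θ < 1)
    (hgrad : ∀ s, deriv f s ≤ lam * f s ^ θ)
    (hmono : ∀ s, 0 ≤ s → 0 ≤ deriv f s)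
    {t : ℝ} (ht : 0 ≤ t) {ε : ℝ} (hε : 0 < ε) :
    (f t + ε) ^ (1 - θ) ≤ (f 0 + ε) ^ (1 - θ) + (1 - θ) * lam * t := by
  have h1θ : (0:ℝ) < 1 - θ := by linarith
  have hpos : ∀ s, 0 < f s + ε := fun s => by linarith [hfnn s]
  set F : ℝ → ℝ := fun s => (1 - θ) * lam * s - (f s + ε) ^ (1 - θ) with hFdef
  have hFd : ∀ s, HasDerivAt F
      ((1 - θ) * lam - deriv f s * (1 - θ) * (f s + ε) ^ (1 - θ - 1)) s := by
    intro s
    have hg : HasDerivAt (fun u => (f u + ε) ^ (1 - θ))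
        (deriv f s * (1 - θ) * (f s + ε) ^ (1 - θ - 1)) s := by
      have := ((hf s).hasDerivAt.add_const ε).rpow_const
        (p := 1 - θ) (Or.inl (ne_of_gt (hpos s)))
      simpa using this
    rw [hFdef]
    exact (((hasDerivAt_id s).const_mul ((1 - θ) * lam)).sub hg).congr_deriv (by ring)
  have hFmono : MonotoneOn F (Icc 0 t) := by
    apply monotoneOn_of_deriv_nonneg (convex_Icc _ _)
    · exact fun s _ => ((hFd s).differentiableAt.continuousAt).continuousWithinAt
    · exact fun s _ => ((hFd s).differentiableAt).differentiableWithinAt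
    · intro s hs
      rw [interior_Icc] at hs
      rw [(hFd s).deriv]
      have hds : 0 ≤ deriv f s := hmono s hs.1.le
      have hup : deriv f s ≤ lam * (f s + ε) ^ θ := by
        refine (hgrad s).trans ?_
        exact mul_le_mul_of_nonneg_left
          (Real.rpow_le_rpow (hfnn s) (by linarith) hθ0) hlam.le
      have hexp : (f s + ε) ^ (1 - θ - 1) = ((f s + ε) ^ θ)⁻¹ := by
        rw [show (1 - θ - 1 : ℝ) = -θ by ring, Real.rpow_neg (hpos s).le]
      have hθs : 0 < (f s + ε) ^ θ := Real.rpow_pos_of_pos (hpos s) θ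
      have : deriv f s * (1 - θ) * (f s + ε) ^ (1 - θ - 1) ≤ (1 - θ) * lam := by
        rw [hexp]
        have h5 : deriv f s * (1 - θ) * ((f s + ε) ^ θ)⁻¹ ≤
            lam * (f s + ε) ^ θ * (1 - θ) * ((f s + ε) ^ θ)⁻¹ := by
          apply mul_le_mul_of_nonneg_right _ (inv_nonneg.mpr hθs.le)
          exact mul_le_mul_of_nonneg_right hup h1θ.le
        have h6 : lam * (f s + ε) ^ θ * (1 - θ) * ((f s + ε) ^ θ)⁻¹ =
            (1 - θ) * lam := by
          field_simp
        linarith [h5, h6 ▸ h5]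
      linarith
  have := hFmono (left_mem_Icc.mpr ht) (right_mem_Icc.mpr ht) ht
  simp only [hFdef] at this
  linarith

lemma sbl_concave {θ a b : ℝ} (hθ0 : 0 ≤ θ) (hθ1 : θ < 1) (ha : 0 ≤ a) (hab : a < b) :
    (1 - θ) * (b - a) ≤ b ^ θ * (b ^ (1 - θ) - a ^ (1 - θ)) := by
  have h1θ : (0:ℝ) < 1 - θ := by linarith
  have hb : 0 < b := lt_of_le_of_lt ha hab
  have hcont : ContinuousOn (fun x : ℝ => x ^ (1 - θ)) (Icc a b) :=
    fun x _ => (Real.continuousAt_rpow_const x _ (Or.inr h1θ.le)).continuousWithinAt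
  have hderiv : ∀ x ∈ Ioo a b, HasDerivAt (fun x : ℝ => x ^ (1 - θ))
      ((1 - θ) * x ^ (1 - θ - 1)) x := by
    intro x hx
    exact Real.hasDerivAt_rpow_const (Or.inl (ne_of_gt (lt_of_le_of_lt ha hx.1)))
  obtain ⟨c, hc, hceq⟩ := exists_hasDerivAt_eq_slope (fun x : ℝ => x ^ (1 - θ))
    _ hab hcont hderiv
  have hcpos : 0 < c := lt_of_le_of_lt ha hc.1
  have hΔ : b ^ (1 - θ) - a ^ (1 - θ) = (1 - θ) * c ^ (1 - θ - 1) * (b - a) := by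
    rw [hceq]
    field_simp [sub_ne_zero.mpr hab.ne']
  have hcexp : c ^ (1 - θ - 1) = (c ^ θ)⁻¹ := by
    rw [show (1 - θ - 1 : ℝ) = -θ by ring, Real.rpow_neg hcpos.le]
  have hcθ : 0 < c ^ θ := Real.rpow_pos_of_pos hcpos θ
  have hfac : 1 ≤ b ^ θ * (c ^ θ)⁻¹ := by
    rw [← div_eq_mul_inv, le_div_iff₀ hcθ, one_mul]
    exact Real.rpow_le_rpow hcpos.le hc.2.le hθ0
  calc (1 - θ) * (b - a) ≤ (1 - θ) * (b - a) * (b ^ θ * (c ^ θ)⁻¹) :=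
        le_mul_of_one_le_right (by nlinarith) hfac
    _ = b ^ θ * ((1 - θ) * c ^ (1 - θ - 1) * (b - a)) := by
        rw [hcexp]; ring
    _ = b ^ θ * (b ^ (1 - θ) - a ^ (1 - θ)) := by rw [← hΔ]

theorem sufficient_condition_self_bounding_lipschitz
    {V : Type*} [SeminormedAddCommGroup V] {Y : Type*}
    (L : V → Y → ℝ) (hLnonneg : ∀ u y, 0 ≤ L u y)
    (lam θ : ℝ) (hlam : 0 < lam) (hθ0 : 0 ≤ θ) (hθ1 : θ < 1)
    (φ : V → Y → ℝ → ℝ)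
    (hφnonneg : ∀ u y t, 0 ≤ φ u y t)
    (hφdiff : ∀ u y, Differentiable ℝ (φ u y))
    (h1 : ∀ u y, φ u y 0 = L u y)
    (h2 : ∀ (u : V) (y : Y) (t : ℝ), 0 < t → ∀ v : V, ‖u - v‖ ≤ t → L v y ≤ φ u y t)
    (h3 : ∀ (u : V) (y : Y) (t : ℝ), 0 ≤ t → 0 ≤ deriv (φ u y) t)
    (h4 : ∀ (u : V) (y : Y) (t₀ t₁ : ℝ),
      |deriv (φ u y) t₁ - deriv (φ u y) t₀| ≤
        (lam / 2) ^ ((1 : ℝ) / (1 - θ)) * |t₁ - t₀| ^ (θ / (1 - θ))) :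
    ∀ (u v : V) (y : Y),
      |L u y - L v y| ≤ lam * max (L u y) (L v y) ^ θ * ‖u - v‖ := by
  have h1θ : (0:ℝ) < 1 - θ := by linarith
  have key : ∀ (u v : V) (y : Y),
      L v y - L u y ≤ lam * max (L u y) (L v y) ^ θ * ‖u - v‖ := by
    intro u v y
    set t := ‖u - v‖ with htdef
    have ht : 0 ≤ t := norm_nonneg _
    have hmaxnn : 0 ≤ max (L u y) (L v y) := le_trans (hLnonneg u y) (le_max_left _ _)
    have hRHS : 0 ≤ lam * max (L u y) (L v y) ^ θ * t :=
      mul_nonneg (mul_nonneg hlam.le (Real.rpow_nonneg hmaxnn θ)) ht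
    rcases le_or_gt (L v y) (L u y) with hba | hab
    · linarith
    have hbu : ∀ s : ℝ, 0 < s → t ≤ s → L v y ≤ φ u y s := fun s hs hts =>
      h2 u y s hs v hts
    rcases eq_or_lt_of_le ht with ht0 | htpos
    · -- t = 0 : contradiction with L u < L v
      exfalso
      have htend : Tendsto (φ u y) (𝓝[>] 0) (𝓝 (φ u y 0)) :=
        ((hφdiff u y).continuous.tendsto 0).mono_left nhdsWithin_le_nhds
      have hev : ∀ᶠ s in 𝓝[>] (0:ℝ), L v y ≤ φ u y s :=
        eventually_nhdsWithin_of_forall (fun s hs => hbu s hs ((le_of_eq ht0.symm).trans hs.le))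
      have := ge_of_tendsto htend hev
      rw [h1] at this
      linarith
    · -- t > 0
      rw [max_eq_right hab.le]
      have hgrad : ∀ s, deriv (φ u y) s ≤ lam * φ u y s ^ θ :=
        sbl_grad (hφdiff u y) (hφnonneg u y) hlam hθ0 hθ1 (fun a b => h4 u y a b)
      have hεb : ∀ ε : ℝ, 0 < ε → L v y - L u y ≤ lam * (L v y + ε) ^ θ * t := by
        intro ε hε
        have hode := sbl_ode (hφdiff u y) (hφnonneg u y) hlam hθ0 hθ1 hgrad
          (fun s hs => h3 u y s hs) ht hε
        rw [h1] at hode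
        have hb : L v y + ε ≤ φ u y t + ε :=
          add_le_add_left (hbu t htpos le_rfl) ε
        have h6 : (L v y + ε) ^ (1 - θ) ≤ (L u y + ε) ^ (1 - θ) + (1 - θ) * lam * t :=
          le_trans (Real.rpow_le_rpow (by linarith [hLnonneg v y]) hb h1θ.le) hode
        have hconc := sbl_concave hθ0 hθ1 (by linarith [hLnonneg u y] : (0:ℝ) ≤ L u y + ε)
          (by linarith : L u y + ε < L v y + ε)
        have hBθ : 0 ≤ (L v y + ε) ^ θ := Real.rpow_nonneg (by linarith [hLnonneg v y]) θ
        have h7 : (L v y + ε) ^ θ * ((L v y + ε) ^ (1 - θ) - (L u y + ε) ^ (1 - θ)) ≤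
            (L v y + ε) ^ θ * ((1 - θ) * lam * t) :=
          mul_le_mul_of_nonneg_left (by linarith) hBθ
        have h8 : (1 - θ) * (L v y - L u y) ≤ (L v y + ε) ^ θ * ((1 - θ) * lam * t) := by
          have : (L v y + ε) - (L u y + ε) = L v y - L u y := by ring
          calc (1 - θ) * (L v y - L u y)
              = (1 - θ) * ((L v y + ε) - (L u y + ε)) := by ring
            _ ≤ (L v y + ε) ^ θ * ((L v y + ε) ^ (1 - θ) - (L u y + ε) ^ (1 - θ)) := hconc
            _ ≤ (L v y + ε) ^ θ * ((1 - θ) * lam * t) := h7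
        nlinarith [h8]
      -- take ε → 0⁺
      have hcont : ContinuousAt (fun ε : ℝ => lam * (L v y + ε) ^ θ * t) 0 := by
        have hc1 : ContinuousAt (fun ε : ℝ => L v y + ε) 0 :=
          (continuous_const.add continuous_id).continuousAt
        have hc2 : ContinuousAt (fun x : ℝ => x ^ θ) (L v y + 0) :=
          Real.continuousAt_rpow_const _ θ (Or.inr hθ0)
        exact (continuousAt_const.mul (hc2.comp hc1)).mul continuousAt_const
      have htend : Tendsto (fun ε : ℝ => lam * (L v y + ε) ^ θ * t) (𝓝[>] 0)
          (𝓝 (lam * L v y ^ θ * t)) := by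
        have := hcont.continuousWithinAt (s := Ioi (0:ℝ))
        rw [ContinuousWithinAt] at this
        simpa using this
      exact ge_of_tendsto htend
        (eventually_nhdsWithin_of_forall (fun ε hε => hεb ε hε))
  intro u v y
  rw [abs_sub_le_iff]
  constructor
  · have := key v u y
    rwa [max_comm, norm_sub_rev] at this
  · exact key u v y
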